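/- Let π ∈ S_n with n ≥ 2. If |π(1) − π(n)| = 1, π(1) ≠ n, and π(n) ≠ 1, then the domination number of the permutation graph G_π equals 2 and {π(1), π(n)} is a minimum dominating set. -/

import Mathlib

/-- The permutation graph of `π`: vertices `0,…,n-1` (0-indexed version of `1,…,n`),
with `i < j` adjacent iff `π⁻¹ i > π⁻¹ j`. -/
def permGraph {n : ℕ} (π : Equiv.Perm (Fin n)) : SimpleGraph (Fin n) where
  Adj i j := (i < j ∧ π.symm j < π.symm i) ∨ (j < i ∧ π.symm i < π.symm j)
  symm := ⟨by intro i j h; tauto⟩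
  loopless := ⟨by intro i h; rcases h with ⟨h, _⟩ | ⟨h, _⟩ <;> exact lt_irrefl i h⟩

/-- `D` dominates `G`: every vertex is in `D` or adjacent to an element of `D`. -/
def Dominates {V : Type*} (G : SimpleGraph V) (D : Set V) : Prop :=
  ∀ v, v ∈ D ∨ ∃ d ∈ D, G.Adj v d

/-- The domination number: minimum cardinality of a dominating set. -/
noncomputable def domNumber {V : Type*} [Fintype V] (G : SimpleGraph V) : ℕ :=
  sInf {k | ∃ D : Finset V, D.card = k ∧ Dominates G ↑D}

/-- Closed neighborhood `N[x]`. -/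
def closedNbhd {V : Type*} (G : SimpleGraph V) (x : V) : Set V :=
  {y | y = x ∨ G.Adj x y}

/-- Degree of a vertex. -/
noncomputable def deg {V : Type*} (G : SimpleGraph V) (v : V) : ℕ :=
  (G.neighborSet v).ncard

set_option maxHeartbeats 1000000 in
theorem consecutive_endpoints_dominating {n : ℕ} (hn : 2 ≤ n) (π : Equiv.Perm (Fin n))
    (hval : ((π ⟨0, by omega⟩ : ℤ) - (π ⟨n - 1, by omega⟩ : ℤ)).natAbs = 1)
    (h1 : π ⟨0, by omega⟩ ≠ ⟨n - 1, by omega⟩)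
    (h2 : π ⟨n - 1, by omega⟩ ≠ ⟨0, by omega⟩) :
    domNumber (permGraph π) = 2 ∧
      Dominates (permGraph π) {π ⟨0, by omega⟩, π ⟨n - 1, by omega⟩} := by
  set z : Fin n := ⟨0, by omega⟩ with hzdef
  set m : Fin n := ⟨n - 1, by omega⟩ with hmdef
  set a := π z with hadef
  set b := π m with hbdef
  have hsa : π.symm a = z := Equiv.symm_apply_apply π z
  have hsb : π.symm b = m := Equiv.symm_apply_apply π m
  have hva : (a : ℤ) = (a.val : ℤ) := rfl
  have hvb : (b : ℤ) = (b.val : ℤ) := rfl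
  have hval' : a.val = b.val + 1 ∨ b.val = a.val + 1 := by
    rw [hva, hvb] at hval; omega
  have hane : a ≠ b := by
    intro h; rw [h] at hval'; omega
  have han : a.val < n := a.is_lt
  have hbn : b.val < n := b.is_lt
  have h1' : a.val ≠ n - 1 := fun h => h1 (Fin.ext h)
  have h2' : b.val ≠ 0 := fun h => h2 (Fin.ext h)
  -- key adjacency facts
  have adj_a : ∀ v : Fin n, v.val < a.val → (permGraph π).Adj v a := by
    intro v hv
    refine Or.inl ⟨Fin.lt_def.mpr hv, Fin.lt_def.mpr ?_⟩
    rw [hsa]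
    have : π.symm v ≠ z := by
      intro h
      have : v = a := by
        have := congrArg π h
        simpa [hadef] using this
      omega
    have : (π.symm v).val ≠ 0 := fun h => this (Fin.ext h)
    simpa [hzdef] using Nat.pos_of_ne_zero this
  have adj_b : ∀ v : Fin n, b.val < v.val → (permGraph π).Adj v b := by
    intro v hv
    refine Or.inr ⟨Fin.lt_def.mpr hv, Fin.lt_def.mpr ?_⟩
    rw [hsb]
    have hne : π.symm v ≠ m := by
      intro h
      have : v = b := by
        have := congrArg π h
        simpa [hbdef] using this
      omega
    have h3 : (π.symm v).val ≠ n - 1 := fun h => hne (Fin.ext h)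
    have h4 : (π.symm v).val < n := (π.symm v).is_lt
    simpa [hmdef] using by omega
  have hdom : Dominates (permGraph π) {a, b} := by
    intro v
    rcases lt_trichotomy v.val a.val with h | h | h
    · exact Or.inr ⟨a, by simp, adj_a v h⟩
    · exact Or.inl (by simp [Fin.ext_iff, h])
    · rcases le_or_gt v.val b.val with h' | h'
      · have : v = b := Fin.ext (by omega)
        exact Or.inl (by simp [this])
      · exact Or.inr ⟨b, by simp, adj_b v h'⟩
  have hnot1 : ∀ d : Fin n, ¬ Dominates (permGraph π) {d} := by
    intro d hd
    have hda : d.val ≤ a.val := by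
      rcases hd a with h | ⟨d', hd', hadj⟩
      · simp only [Set.mem_singleton_iff] at h; omega
      · have hd'' : d' = d := hd'
        rw [hd''] at hadj
        rcases hadj with ⟨hx, hy⟩ | ⟨hx, hy⟩
        · rw [hsa] at hy
          exact absurd (Fin.lt_def.mp hy) (by simp [hzdef])
        · exact le_of_lt (Fin.lt_def.mp hx)
    have hdb : b.val ≤ d.val := by
      rcases hd b with h | ⟨d', hd', hadj⟩
      · simp only [Set.mem_singleton_iff] at h; omega
      · have hd'' : d' = d := hd'
        rw [hd''] at hadj
        rcases hadj with ⟨hx, hy⟩ | ⟨hx, hy⟩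
        · exact le_of_lt (Fin.lt_def.mp hx)
        · rw [hsb] at hy
          have := Fin.lt_def.mp hy
          have := (π.symm d).is_lt
          simp [hmdef] at *; omega
    have hcase : d = a ∨ d = b := by
      rcases hval' with h | h
      · rcases Nat.lt_or_ge d.val a.val with h' | h'
        · exact Or.inr (Fin.ext (by omega))
        · exact Or.inl (Fin.ext (by omega))
      · omega
    rcases hcase with rfl | rfl
    · rcases hd m with h | ⟨d', hd', hadj⟩
      · simp only [Set.mem_singleton_iff] at h
        exact h1 h.symm
      · have hd'' : d' = a := hd'
        rw [hd''] at hadj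
        rcases hadj with ⟨hx, hy⟩ | ⟨hx, hy⟩
        · have := Fin.lt_def.mp hx
          simp [hmdef] at this; omega
        · rw [hsa] at hy
          exact absurd (Fin.lt_def.mp hy) (by simp [hzdef])
    · rcases hd z with h | ⟨d', hd', hadj⟩
      · simp only [Set.mem_singleton_iff] at h
        exact h2 h.symm
      · have hd'' : d' = b := hd'
        rw [hd''] at hadj
        rcases hadj with ⟨hx, hy⟩ | ⟨hx, hy⟩
        · rw [hsb] at hy
          have := Fin.lt_def.mp hy
          have := (π.symm z).is_lt
          simp [hmdef] at *; omega
        · have := Fin.lt_def.mp hx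
          simp [hzdef] at this
  refine ⟨?_, hdom⟩
  have hmem2 : 2 ∈ {k | ∃ D : Finset (Fin n), D.card = k ∧ Dominates (permGraph π) ↑D} := by
    refine ⟨{a, b}, Finset.card_pair hane, ?_⟩
    have : (({a, b} : Finset (Fin n)) : Set (Fin n)) = {a, b} := by simp
    rw [this]; exact hdom
  apply le_antisymm
  · exact Nat.sInf_le hmem2
  · refine le_csInf ⟨2, hmem2⟩ ?_
    rintro k ⟨D, hcard, hdomD⟩
    by_contra hk
    push_neg at hk
    interval_cases k
    · have hD : D = ∅ := Finset.card_eq_zero.mp hcard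
      subst hD
      rcases hdomD z with h | ⟨d, hd, _⟩
      · simp at h
      · simp at hd
    · obtain ⟨d, rfl⟩ := Finset.card_eq_one.mp hcard
      exact hnot1 d (by simpa using hdomD)
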